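/- Nonemptiness of structured relational models: if M = (V, E, 𝒮) is a structured relational model with (V,E) a finite dag, then the combined relation ⊗𝒮 is nonempty; i.e., there exists at least one global assignment α : V → Bool consistent with every local relation s_v. -/

import Mathlib

/-- A relational structure over variables of type `ι`: a domain of variables and a
set of (total representatives of) assignments, cylindrical over the domain. -/
structure RelStr (ι : Type*) where
  dom : Set ι
  A : Set (ι → Bool)
  cyl : ∀ u v : ι → Bool, (∀ x ∈ dom, u x = v x) → u ∈ A → v ∈ A

namespace RelStr
variable {ι : Type*}

/-- Combination (join) of relational structures. -/
def comb (s t : RelStr ι) : RelStr ι where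
  dom := s.dom ∪ t.dom
  A := s.A ∩ t.A
  cyl := fun u v h hu =>
    ⟨s.cyl u v (fun x hx => h x (Or.inl hx)) hu.1,
     t.cyl u v (fun x hx => h x (Or.inr hx)) hu.2⟩

/-- Marginalization (projection) of a relational structure onto a set of variables. -/
def marg (s : RelStr ι) (X : Set ι) : RelStr ι where
  dom := s.dom ∩ X
  A := {u | ∃ a ∈ s.A, ∀ x ∈ s.dom ∩ X, u x = a x}
  cyl := fun u v h hu => by
    obtain ⟨a, ha, hag⟩ := hu
    exact ⟨a, ha, fun x hx => (h x hx).symm.trans (hag x hx)⟩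

/-- The full relational structure `e_X` on variables `X`. -/
def full (X : Set ι) : RelStr ι where
  dom := X
  A := Set.univ
  cyl := fun _ _ _ _ => trivial

/-- Variable elimination. -/
def elim (s : RelStr ι) (x : ι) : RelStr ι := s.marg (s.dom \ {x})

/-- Combination of a finite family (list) of relational structures. -/
def bigComb (l : List (RelStr ι)) : RelStr ι := l.foldr comb (full ∅)

end RelStr

/-- A structured relational model: a finite dag `(V, E)` together with a local
relational structure `s v` for each node `v ∈ V`, whose domain is `v` together
with its parents, and which does not constrain its parents. -/
structure StructModel (ι : Type*) where
  V : Finset ι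
  E : ι → ι → Prop
  s : ι → RelStr ι
  acyclic : ∀ v, ¬ Relation.TransGen E v v
  edge_mem : ∀ u v, E u v → u ∈ V ∧ v ∈ V
  dom_eq : ∀ v ∈ V, (s v).dom = insert v {u | E u v}
  no_constrain : ∀ v ∈ V, (s v).marg {u | E u v} = RelStr.full {u | E u v}

/-- The combined relation `⊗𝒮` of a structured model. -/
noncomputable def StructModel.combined {ι : Type*} (M : StructModel ι) : RelStr ι :=
  RelStr.bigComb (M.V.toList.map M.s)


section Aux
open scoped Classical
variable {ι : Type*}

lemma StructModel.wfE (M : StructModel ι) : WellFounded M.E := by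
  have hwf : WellFounded (fun u v : M.V => Relation.TransGen M.E u.1 v.1) := by
    haveI : IsTrans M.V (fun u v : M.V => Relation.TransGen M.E u.1 v.1) :=
      ⟨fun a b c hab hbc => hab.trans hbc⟩
    haveI : IsIrrefl M.V (fun u v : M.V => Relation.TransGen M.E u.1 v.1) :=
      ⟨fun a h => M.acyclic a.1 h⟩
    exact Finite.wellFounded_of_trans_of_irrefl _
  constructor
  intro v
  by_cases hv : v ∈ M.V
  · have : ∀ x : M.V, Acc M.E x.1 := by
      intro x
      induction hwf.apply x with
      | intro x _ ih =>
        refine Acc.intro _ (fun u hu => ?_)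
        have hum : u ∈ M.V := (M.edge_mem u x.1 hu).1
        exact ih ⟨u, hum⟩ (Relation.TransGen.single hu)
    exact this ⟨v, hv⟩
  · exact Acc.intro _ (fun u hu => absurd (M.edge_mem u v hu).2 hv)

lemma StructModel.ext_exists (M : StructModel ι) (v : ι) (hv : v ∈ M.V)
    (g : ι → Bool) :
    ∃ a ∈ (M.s v).A, ∀ x ∈ (M.s v).dom ∩ {u | M.E u v}, g x = a x := by
  have h := M.no_constrain v hv
  have : g ∈ ((M.s v).marg {u | M.E u v}).A := by
    rw [h]; trivial
  exact this

noncomputable def StructModel.assign (M : StructModel ι) : ι → Bool :=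
  M.wfE.fix (fun v rec =>
    if h : v ∈ M.V then
      Classical.choose
        (M.ext_exists v h (fun u => if hu : M.E u v then rec u hu else false)) v
    else false)

lemma StructModel.assign_mem (M : StructModel ι) (v : ι) (hv : v ∈ M.V) :
    M.assign ∈ (M.s v).A := by
  set g : ι → Bool := fun u => if hu : M.E u v then M.assign u else false with hg
  obtain ⟨ha, hagree⟩ := Classical.choose_spec (M.ext_exists v hv g)
  set a := Classical.choose (M.ext_exists v hv g) with hadef
  have hav : M.assign v = a v := by
    rw [StructModel.assign, WellFounded.fix_eq, dif_pos hv]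
    rfl
  refine (M.s v).cyl a M.assign (fun x hx => ?_) ha
  rw [M.dom_eq v hv] at hx
  rcases hx with hx | hx
  · subst hx; exact hav.symm
  · have hxd : x ∈ (M.s v).dom ∩ {u | M.E u v} := by
      refine ⟨?_, hx⟩
      rw [M.dom_eq v hv]; exact Or.inr hx
    have := hagree x hxd
    have hEx : M.E x v := hx
    have hgx : g x = M.assign x := by simp only [hg, dif_pos hEx]
    rw [← this, ← hgx]

lemma RelStr.mem_bigComb {ι : Type*} (l : List (RelStr ι)) (u : ι → Bool) :
    u ∈ (RelStr.bigComb l).A ↔ ∀ s ∈ l, u ∈ s.A := by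
  induction l with
  | nil => simp [RelStr.bigComb, RelStr.full]
  | cons s l ih =>
    simp only [RelStr.bigComb, List.foldr] at *
    constructor
    · rintro ⟨h1, h2⟩ t ht
      rcases List.mem_cons.mp ht with rfl | ht
      · exact h1
      · exact ih.mp h2 t ht
    · intro h
      exact ⟨h s List.mem_cons_self, ih.mpr (fun t ht => h t (List.mem_cons_of_mem _ ht))⟩

end Aux

/-- Nonemptiness of structured relational models: there is at least one global
assignment consistent with every local relation. -/
theorem structModel_nonempty {ι : Type*} (M : StructModel ι) :
    M.combined.A.Nonempty := by
  refine ⟨M.assign, ?_⟩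
  rw [StructModel.combined, RelStr.mem_bigComb]
  intro t ht
  obtain ⟨v, hv, rfl⟩ := List.mem_map.mp ht
  exact M.assign_mem v (Finset.mem_toList.mp hv)
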